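/- Fix partitions λ¹,…,λ^r and for I ⊆ [r] set u_I = hook_α(λ^I) where λ^I = ⊕_{i∈I} λ^i is the entry-wise sum and hook_α(λ) = ∏_{□∈λ}(α·a(□) + ℓ(□) + 1). Then for every H ⊆ [r] with |H| ≥ 2, the rational function ∏_{G⊆H} u_G^{(-1)^{|H|-|G|}} − 1 is O(α^{|H|-1}), i.e., divisible by α^{|H|-1} with no pole at α = 0. -/

import Mathlib

open scoped BigOperators

/-- Conjugate partition (0-indexed): `conjPart f c` is the height of the
column of index `c`, i.e. the number of rows `j` with `f j ≥ c+1`. -/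
def conjPart (f : ℕ →₀ ℕ) (c : ℕ) : ℕ :=
  (f.support.filter (fun j => c + 1 ≤ f j)).card

/-- The boxes of the Young diagram of `f` (0-indexed). -/
def cells (f : ℕ →₀ ℕ) : Finset (ℕ × ℕ) :=
  f.support.biUnion (fun j => (Finset.range (f j)).image (fun i => (i, j)))

/-- Arm-length of the box `b = (i,j)` (0-indexed). -/
def armL (f : ℕ →₀ ℕ) (b : ℕ × ℕ) : ℕ := f b.2 - (b.1 + 1)

/-- Leg-length of the box `b = (i,j)` (0-indexed). -/
def legL (f : ℕ →₀ ℕ) (b : ℕ × ℕ) : ℕ := conjPart f b.1 - (b.2 + 1)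

/-- The α-hook polynomial `hook_α(λ) = ∏_{□∈λ}(α·a(□) + ℓ(□) + 1)`,
viewed as a rational function in `α`. -/
noncomputable def hookA (f : ℕ →₀ ℕ) : RatFunc ℚ :=
  ∏ b ∈ cells f,
    (RatFunc.X * (armL f b : RatFunc ℚ) + (legL f b : RatFunc ℚ) + 1)

/-- No pole at `α = 0`. -/
def NoPoleAtZero (f : RatFunc ℚ) : Prop := Polynomial.eval 0 f.denom ≠ 0

/-- `f = O(α^k)`. -/
def IsBigO (k : ℕ) (f : RatFunc ℚ) : Prop :=
  ∃ g : RatFunc ℚ, NoPoleAtZero g ∧ f = RatFunc.X ^ k * g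

section Aux
open Polynomial Finset

-- finite differences of low-degree monomials vanish
lemma FD {r : ℕ} (x : Fin r → ℚ) : ∀ (K : Finset (Fin r)) (j : ℕ), j < K.card →
    ∑ G ∈ K.powerset, (-1:ℚ)^(K.card - G.card) * (∑ t ∈ G, x t)^j = 0 := by
  intro K
  induction K using Finset.induction_on with
  | empty => intro j hj; exact absurd hj (Nat.not_lt_zero j)
  | @insert a K ha ih =>
    intro j hj
    rw [Finset.powerset_insert, Finset.sum_union]
    · rw [Finset.sum_image (fun G hG G' hG' h => by
        have hG1 : a ∉ G := fun hx => ha ((Finset.mem_powerset.mp hG) hx)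
        have hG2 : a ∉ G' := fun hx => ha ((Finset.mem_powerset.mp hG') hx)
        rw [← Finset.erase_insert hG1, ← Finset.erase_insert hG2, h])]
      have hcard : (insert a K).card = K.card + 1 := Finset.card_insert_of_notMem ha
      have key : ∀ G ∈ K.powerset,
          (-1:ℚ)^((insert a K).card - G.card) * (∑ t ∈ G, x t)^j
          + (-1:ℚ)^((insert a K).card - (insert a G).card) * (∑ t ∈ insert a G, x t)^j
          = (-1:ℚ)^(K.card - G.card) * ((∑ t ∈ G, x t + x a)^j - (∑ t ∈ G, x t)^j) := by
        intro G hG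
        have hGK := Finset.mem_powerset.mp hG
        have haG : a ∉ G := fun hx => ha (hGK hx)
        have h1 : (insert a G).card = G.card + 1 := Finset.card_insert_of_notMem haG
        have h2 : G.card ≤ K.card := Finset.card_le_card hGK
        have h3 : (insert a K).card - G.card = (K.card - G.card) + 1 := by omega
        have h4 : (insert a K).card - (insert a G).card = K.card - G.card := by omega
        rw [h3, h4, Finset.sum_insert haG]
        ring
      rw [← Finset.sum_add_distrib, Finset.sum_congr rfl key]
      -- now expand the difference of powers
      have expand : ∀ y : ℚ, (y + x a)^j - y^j
          = ∑ i ∈ Finset.range j, y^i * x a^(j-i) * (j.choose i) := by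
        intro y
        rw [add_pow]
        rw [Finset.sum_range_succ]
        simp [mul_comm]
      calc ∑ G ∈ K.powerset, (-1:ℚ)^(K.card - G.card) * ((∑ t ∈ G, x t + x a)^j - (∑ t ∈ G, x t)^j)
          = ∑ G ∈ K.powerset, ∑ i ∈ Finset.range j,
              (x a^(j-i) * (j.choose i)) * ((-1:ℚ)^(K.card - G.card) * (∑ t ∈ G, x t)^i) := by
            refine Finset.sum_congr rfl fun G _ => ?_
            rw [expand, Finset.mul_sum]
            exact Finset.sum_congr rfl fun i _ => by ring
        _ = ∑ i ∈ Finset.range j, (x a^(j-i) * (j.choose i)) *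
              (∑ G ∈ K.powerset, (-1:ℚ)^(K.card - G.card) * (∑ t ∈ G, x t)^i) := by
            rw [Finset.sum_comm]
            exact Finset.sum_congr rfl fun i _ => by rw [Finset.mul_sum]
        _ = 0 := by
            refine Finset.sum_eq_zero fun i hi => ?_
            rw [ih i ?_, mul_zero]
            have := Finset.mem_range.mp hi
            omega
    · rw [Finset.disjoint_left]
      rintro G hG hG'
      obtain ⟨G', hG', rfl⟩ := Finset.mem_image.mp hG'
      exact ha (Finset.mem_powerset.mp hG (Finset.mem_insert_self a G'))

noncomputable abbrev Qm (m : ℕ) : Type := Polynomial ℚ ⧸ Ideal.span {(X:Polynomial ℚ)^m}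

noncomputable def pim (m : ℕ) : Polynomial ℚ →+* Qm m := Ideal.Quotient.mk _

lemma pim_eq_iff {m : ℕ} {p q : Polynomial ℚ} : pim m p = pim m q ↔ (X:Polynomial ℚ)^m ∣ p - q := by
  rw [pim, Ideal.Quotient.mk_eq_mk_iff_sub_mem, Ideal.mem_span_singleton]

lemma pim_eq_zero_iff {m : ℕ} {p : Polynomial ℚ} : pim m p = 0 ↔ (X:Polynomial ℚ)^m ∣ p := by
  rw [show (0 : Qm m) = pim m 0 from (map_zero _).symm, pim_eq_iff, sub_zero]

lemma X_dvd_of_eval0 {p : Polynomial ℚ} (h : p.eval 0 = 0) : (X:Polynomial ℚ) ∣ p := by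
  rw [Polynomial.X_dvd_iff, Polynomial.coeff_zero_eq_eval_zero]; exact h

lemma modInv (m : ℕ) (p : Polynomial ℚ) (hp : p.eval 0 ≠ 0) :
    ∃ z, (X:Polynomial ℚ)^m ∣ p * z - 1 := by
  induction m with
  | zero => exact ⟨0, by simp⟩
  | succ m ih =>
    obtain ⟨z, w, hw⟩ := ih
    refine ⟨z - Polynomial.C (w.eval 0 / p.eval 0) * X^m, ?_⟩
    have : p * (z - Polynomial.C (w.eval 0 / p.eval 0) * X^m) - 1
        = X^m * (w - p * Polynomial.C (w.eval 0 / p.eval 0)) := by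
      rw [mul_sub, sub_right_comm, hw]; ring
    rw [this, pow_succ]
    refine mul_dvd_mul (dvd_refl _) (X_dvd_of_eval0 ?_)
    rw [eval_sub, eval_mul, eval_C, mul_div_cancel₀ _ hp, sub_self]

lemma isUnit_pim {m : ℕ} {p : Polynomial ℚ} (hp : p.eval 0 ≠ 0) : IsUnit (pim m p) := by
  obtain ⟨z, hz⟩ := modInv m p hp
  refine IsUnit.of_mul_eq_one (pim m z) ?_
  rw [← map_mul, show (1 : Qm m) = pim m 1 from (map_one _).symm, pim_eq_iff]
  exact hz

-- the climbing lemma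
lemma climb (NN DD : Polynomial ℚ) (hD : DD.eval 0 ≠ 0) (k : ℕ)
    (h1 : (X:Polynomial ℚ) ∣ NN - DD)
    (h2 : (X:Polynomial ℚ)^(k-1) ∣ derivative NN * DD - derivative DD * NN) :
    (X:Polynomial ℚ)^k ∣ NN - DD := by
  set R := NN - DD with hR
  have hF : derivative NN * DD - derivative DD * NN = derivative R * DD - derivative DD * R := by
    have : NN = DD + R := by rw [hR]; ring
    rw [this, derivative_add]; ring
  rw [hF] at h2
  have main : ∀ j, 1 ≤ j → j ≤ k → (X:Polynomial ℚ)^j ∣ R := by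
    intro j
    induction j with
    | zero => intro h; exact absurd h (by norm_num)
    | succ j ih =>
      intro _ hjk
      rcases Nat.eq_zero_or_pos j with rfl | hj1
      · simpa using h1
      obtain ⟨S, hS⟩ := ih hj1 (le_trans (Nat.le_succ j) hjk)
      have hXj : (X:Polynomial ℚ)^j ∣ derivative R * DD - derivative DD * R := by
        refine dvd_trans ?_ h2
        exact pow_dvd_pow _ (by omega)
      have hder : derivative R = Polynomial.C (j:ℚ) * X^(j-1) * S + X^j * derivative S := by
        rw [hS, derivative_mul, derivative_X_pow]
      have hfact : derivative R * DD - derivative DD * R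
          = X^(j-1) * (Polynomial.C (j:ℚ) * S * DD + X * (derivative S * DD - derivative DD * S)) := by
        rw [hder, hS]
        have hXpow : (X:Polynomial ℚ)^j = X^(j-1) * X := by
          rw [← pow_succ]; congr 1; omega
        rw [hXpow]; ring
      have hXdvd : (X:Polynomial ℚ)^j ∣ X^(j-1) * (Polynomial.C (j:ℚ) * S * DD + X * (derivative S * DD - derivative DD * S)) := by
        rw [← hfact]; exact hXj
      have hXj' : (X:Polynomial ℚ)^j = X^(j-1) * X := by rw [← pow_succ]; congr 1; omega
      rw [hXj'] at hXdvd
      have hX1 : (X:Polynomial ℚ) ∣ Polynomial.C (j:ℚ) * S * DD + X * (derivative S * DD - derivative DD * S) := by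
        have hXne : (X:Polynomial ℚ)^(j-1) ≠ 0 := pow_ne_zero _ Polynomial.X_ne_zero
        exact (mul_dvd_mul_iff_left hXne).mp hXdvd
      have hX2 : (X:Polynomial ℚ) ∣ Polynomial.C (j:ℚ) * S * DD :=
        (dvd_add_right (Dvd.intro _ rfl)).mp (by rwa [add_comm] at hX1)
      have heval : Polynomial.eval 0 (Polynomial.C (j:ℚ) * S * DD) = 0 := by
        obtain ⟨u, hu⟩ := hX2
        rw [hu]; simp
      have hS0 : S.eval 0 = 0 := by
        simp only [Polynomial.eval_mul, Polynomial.eval_C] at heval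
        have hj0 : (j:ℚ) ≠ 0 := Nat.cast_ne_zero.mpr (by omega)
        rcases mul_eq_zero.mp heval with h | h
        · rcases mul_eq_zero.mp h with h' | h'
          · exact absurd h' hj0
          · exact h'
        · exact absurd h hD
      obtain ⟨T, hT⟩ := X_dvd_of_eval0 hS0
      refine ⟨T, ?_⟩
      rw [hS, hT, pow_succ]; ring
  rcases Nat.eq_zero_or_pos k with rfl | hk
  · simpa using one_dvd _
  · exact main k hk (le_refl k)


/-- truncated geometric series: inverse of `C v + C d * X` mod `X^m`. -/
noncomputable def iota (v d m : ℕ) : Polynomial ℚ :=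
  ∑ i ∈ range m, C ((-(d:ℚ))^i / (v:ℚ)^(i+1)) * X^i

lemma tele (v d m : ℕ) (hv : 1 ≤ v) :
    (C (v:ℚ) + C (d:ℚ) * X) * iota v d m = 1 - C ((-(d:ℚ))^m / (v:ℚ)^m) * X^m := by
  have hv0 : (v:ℚ) ≠ 0 := Nat.cast_ne_zero.mpr (by omega)
  induction m with
  | zero => simp [iota]
  | succ m ih =>
    rw [iota, Finset.sum_range_succ, mul_add, ← iota, ih]
    have h1 : (C (v:ℚ) + C (d:ℚ) * X) * (C ((-(d:ℚ))^m / (v:ℚ)^(m+1)) * X^m)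
        = C ((-(d:ℚ))^m / (v:ℚ)^m) * X^m - C ((-(d:ℚ))^(m+1) / (v:ℚ)^(m+1)) * X^(m+1) := by
      have e1 : (v:ℚ) * ((-(d:ℚ))^m / (v:ℚ)^(m+1)) = (-(d:ℚ))^m / (v:ℚ)^m := by
        field_simp; ring
      have e2 : (d:ℚ) * ((-(d:ℚ))^m / (v:ℚ)^(m+1)) = -((-(d:ℚ))^(m+1) / (v:ℚ)^(m+1)) := by
        field_simp; ring
      rw [add_mul]
      rw [show C (v:ℚ) * (C ((-(d:ℚ))^m / (v:ℚ)^(m+1)) * X^m) = C ((v:ℚ) * ((-(d:ℚ))^m / (v:ℚ)^(m+1))) * X^m by rw [C_mul]; ring]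
      rw [show C (d:ℚ) * X * (C ((-(d:ℚ))^m / (v:ℚ)^(m+1)) * X^m) = C ((d:ℚ) * ((-(d:ℚ))^m / (v:ℚ)^(m+1))) * X^(m+1) by rw [C_mul, pow_succ]; ring]
      rw [e1, e2, map_neg]
      ring
    rw [h1]
    ring

lemma pim_lin_inv (v d m : ℕ) (hv : 1 ≤ v) :
    pim m ((C (v:ℚ) + C (d:ℚ) * X) * iota v d m) = 1 := by
  rw [tele v d m hv, map_sub, map_one, map_mul]
  have : pim m ((X:Polynomial ℚ)^m) = 0 := by
    rw [pim_eq_zero_iff]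
  rw [this, mul_zero, sub_zero]

/-- `Γ_v(n) = ∏_{d<n} (v + d·X)`. -/
noncomputable def Gam (v n : ℕ) : Polynomial ℚ :=
  ∏ d ∈ range n, (C (v:ℚ) + C (d:ℚ) * X)

lemma Gam_eval0 (v n : ℕ) : (Gam v n).eval 0 = (v:ℚ)^n := by
  rw [Gam, Polynomial.eval_prod]
  simp

noncomputable def rho (v n m : ℕ) : Qm m :=
  ∑ d ∈ range n, pim m (C (d:ℚ) * iota v d m)

lemma logd (v n m : ℕ) (hv : 1 ≤ v) :
    pim m (derivative (Gam v n)) = pim m (Gam v n) * rho v n m := by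
  induction n with
  | zero => simp [Gam, rho]
  | succ n ih =>
    have hGam : Gam v (n+1) = Gam v n * (C (v:ℚ) + C (n:ℚ) * X) := by
      rw [Gam, Finset.prod_range_succ, ← Gam]
    have hrho : rho v (n+1) m = rho v n m + pim m (C (n:ℚ) * iota v n m) := by
      simp only [rho, Finset.sum_range_succ]
    have hder : derivative (C (v:ℚ) + C (n:ℚ) * X) = C (n:ℚ) := by simp
    have hkey : pim m (C (v:ℚ) + C (n:ℚ) * X) * pim m (C (n:ℚ) * iota v n m)
        = pim m (C (n:ℚ)) := by
      rw [← map_mul, show (C (v:ℚ) + C (n:ℚ) * X) * (C (n:ℚ) * iota v n m)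
          = C (n:ℚ) * ((C (v:ℚ) + C (n:ℚ) * X) * iota v n m) by ring,
        map_mul, pim_lin_inv v n m hv, mul_one]
    rw [hGam, derivative_mul, hder, map_add, map_mul, map_mul, map_mul, ih, hrho]
    linear_combination (-1 : Qm m) * pim m (Gam v n) * hkey

lemma logdProd {m : ℕ} {β : Type*} (s : Finset β) (y : β → Polynomial ℚ) (ρ : β → Qm m)
    (h : ∀ a ∈ s, pim m (derivative (y a)) = pim m (y a) * ρ a) :
    pim m (derivative (∏ a ∈ s, y a)) = pim m (∏ a ∈ s, y a) * ∑ a ∈ s, ρ a := by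
  induction s using Finset.cons_induction with
  | empty => simp
  | cons a s ha ih =>
    rw [Finset.prod_cons, Finset.sum_cons, derivative_mul, map_add, map_mul, map_mul, map_mul,
      ih (fun b hb => h b (Finset.mem_cons.mpr (Or.inr hb))),
      h a (Finset.mem_cons_self a s)]
    ring

lemma rho_expand (v n m : ℕ) :
    rho v n m = ∑ i ∈ range m,
      pim m (C ((-1:ℚ)^i / (v:ℚ)^(i+1)) * X^i) * pim m (C (∑ d ∈ range n, (d:ℚ)^(i+1))) := by
  simp only [rho, iota, Finset.mul_sum, map_sum]
  rw [Finset.sum_comm]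
  refine Finset.sum_congr rfl fun i _ => ?_
  refine Finset.sum_congr rfl fun d _ => ?_
  rw [← map_mul]
  congr 1
  have hd : (d:ℚ) * ((-(d:ℚ))^i / (v:ℚ)^(i+1)) = ((-1:ℚ)^i / (v:ℚ)^(i+1)) * (d:ℚ)^(i+1) := by
    rw [neg_pow]
    ring
  calc C (d:ℚ) * (C ((-(d:ℚ))^i / (v:ℚ)^(i+1)) * X^i)
      = C ((d:ℚ) * ((-(d:ℚ))^i / (v:ℚ)^(i+1))) * X^i := by rw [C_mul]; ring
    _ = C ((-1:ℚ)^i / (v:ℚ)^(i+1)) * X^i * C ((d:ℚ)^(i+1)) := by rw [hd, C_mul]; ring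

-- Faulhaber + FD: alternating sums of power sums vanish
lemma FD_S {r : ℕ} (mw : Fin r → ℕ) (K : Finset (Fin r)) (p : ℕ) (hp : p + 1 < K.card) :
    ∑ G ∈ K.powerset, (-1:ℚ)^(K.card - G.card) * (∑ d ∈ range (∑ t ∈ G, mw t), (d:ℚ)^p) = 0 := by
  have expand : ∀ G : Finset (Fin r),
      (∑ d ∈ range (∑ t ∈ G, mw t), (d:ℚ)^p)
      = ∑ i ∈ range (p+1), (_root_.bernoulli i * ((p+1).choose i) / (p+1)) * (∑ t ∈ G, (mw t : ℚ))^(p+1-i) := by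
    intro G
    rw [sum_range_pow]
    refine Finset.sum_congr rfl fun i _ => ?_
    rw [Nat.cast_sum]
    ring
  calc ∑ G ∈ K.powerset, (-1:ℚ)^(K.card - G.card) * (∑ d ∈ range (∑ t ∈ G, mw t), (d:ℚ)^p)
      = ∑ G ∈ K.powerset, ∑ i ∈ range (p+1),
          (_root_.bernoulli i * ((p+1).choose i) / (p+1)) * ((-1:ℚ)^(K.card - G.card) * (∑ t ∈ G, (mw t : ℚ))^(p+1-i)) := by
        refine Finset.sum_congr rfl fun G _ => ?_
        rw [expand, Finset.mul_sum]
        exact Finset.sum_congr rfl fun i _ => by ring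
    _ = ∑ i ∈ range (p+1), (_root_.bernoulli i * ((p+1).choose i) / (p+1)) *
          (∑ G ∈ K.powerset, (-1:ℚ)^(K.card - G.card) * (∑ t ∈ G, (mw t : ℚ))^(p+1-i)) := by
        rw [Finset.sum_comm]
        exact Finset.sum_congr rfl fun i _ => by rw [Finset.mul_sum]
    _ = 0 := by
        refine Finset.sum_eq_zero fun i _ => ?_
        rw [FD (fun t => (mw t : ℚ)) K (p+1-i) (by omega), mul_zero]

-- splitting an alternating sum into even/odd parts
lemma EvOd {r : ℕ} (K : Finset (Fin r)) (f : Finset (Fin r) → ℚ)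
    (h : ∑ G ∈ K.powerset, (-1:ℚ)^(K.card - G.card) * f G = 0) :
    ∑ G ∈ K.powerset.filter (fun G => Even (K.card - G.card)), f G
    = ∑ G ∈ K.powerset.filter (fun G => ¬ Even (K.card - G.card)), f G := by
  have := Finset.sum_filter_add_sum_filter_not K.powerset (fun G => Even (K.card - G.card))
    (fun G => (-1:ℚ)^(K.card - G.card) * f G)
  rw [h] at this
  have h1 : ∑ G ∈ K.powerset.filter (fun G => Even (K.card - G.card)),
      (-1:ℚ)^(K.card - G.card) * f G
      = ∑ G ∈ K.powerset.filter (fun G => Even (K.card - G.card)), f G := by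
    refine Finset.sum_congr rfl fun G hG => ?_
    rw [(Finset.mem_filter.mp hG).2.neg_one_pow, one_mul]
  have h2 : ∑ G ∈ K.powerset.filter (fun G => ¬ Even (K.card - G.card)),
      (-1:ℚ)^(K.card - G.card) * f G
      = - ∑ G ∈ K.powerset.filter (fun G => ¬ Even (K.card - G.card)), f G := by
    rw [← Finset.sum_neg_distrib]
    refine Finset.sum_congr rfl fun G hG => ?_
    rw [(Nat.not_even_iff_odd.mp (Finset.mem_filter.mp hG).2).neg_one_pow]
    ring
  rw [h1, h2] at this
  linarith

/-- The analytic core: alternating products of `Γ_v` at additive arguments agree mod `X^(|K|-1)`. -/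
lemma core {r : ℕ} (v : ℕ) (hv : 1 ≤ v) (mw : Fin r → ℕ) (K : Finset (Fin r)) (hK : 2 ≤ K.card) :
    (X:Polynomial ℚ)^(K.card - 1) ∣
      (∏ G ∈ K.powerset.filter (fun G => Even (K.card - G.card)), Gam v (∑ t ∈ G, mw t))
      - (∏ G ∈ K.powerset.filter (fun G => ¬ Even (K.card - G.card)), Gam v (∑ t ∈ G, mw t)) := by
  set Ev := K.powerset.filter (fun G => Even (K.card - G.card)) with hEv
  set Od := K.powerset.filter (fun G => ¬ Even (K.card - G.card)) with hOd
  set n : Finset (Fin r) → ℕ := fun G => ∑ t ∈ G, mw t with hn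
  set NN := ∏ G ∈ Ev, Gam v (n G) with hNN
  set DD := ∏ G ∈ Od, Gam v (n G) with hDD
  have hv0 : (v:ℚ) ≠ 0 := Nat.cast_ne_zero.mpr (by omega)
  have hDD0 : DD.eval 0 ≠ 0 := by
    rw [hDD, Polynomial.eval_prod]
    exact Finset.prod_ne_zero_iff.mpr fun G _ => by rw [Gam_eval0]; exact pow_ne_zero _ hv0
  -- step 1 : X ∣ NN - DD
  have hsum : ∑ G ∈ Ev, ((n G : ℚ)) = ∑ G ∈ Od, ((n G : ℚ)) := by
    refine EvOd K _ ?_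
    have h := FD (fun t => (mw t : ℚ)) K 1 (by omega)
    calc ∑ G ∈ K.powerset, (-1:ℚ)^(K.card - G.card) * ((n G : ℚ))
        = ∑ G ∈ K.powerset, (-1:ℚ)^(K.card - G.card) * (∑ t ∈ G, (mw t : ℚ))^1 := by
          refine Finset.sum_congr rfl fun G _ => ?_
          rw [hn, Nat.cast_sum, pow_one]
      _ = 0 := h
  have h1 : (X:Polynomial ℚ) ∣ NN - DD := by
    refine X_dvd_of_eval0 ?_
    have e : ∀ (S : Finset (Finset (Fin r))), Polynomial.eval 0 (∏ G ∈ S, Gam v (n G)) = (v:ℚ)^(∑ G ∈ S, n G) := by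
      intro S
      rw [Polynomial.eval_prod, Finset.prod_congr rfl (fun G _ => Gam_eval0 v (n G)),
        Finset.prod_pow_eq_pow_sum]
    have hsumN : ∑ G ∈ Ev, n G = ∑ G ∈ Od, n G := by
      have : ((∑ G ∈ Ev, n G : ℕ) : ℚ) = ((∑ G ∈ Od, n G : ℕ) : ℚ) := by
        push_cast
        exact hsum
      exact_mod_cast this
    rw [Polynomial.eval_sub, e Ev, e Od, hsumN, sub_self]
  -- step 2 : X^(K.card - 2) divides the log-derivative difference
  have h2 : (X:Polynomial ℚ)^(K.card - 1 - 1) ∣ derivative NN * DD - derivative DD * NN := by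
    set m := K.card - 1 - 1 with hm
    rw [← pim_eq_zero_iff (m := m)]
    have hlogN : pim m (derivative NN) = pim m NN * ∑ G ∈ Ev, rho v (n G) m :=
      logdProd Ev _ _ (fun G _ => logd v (n G) m hv)
    have hlogD : pim m (derivative DD) = pim m DD * ∑ G ∈ Od, rho v (n G) m :=
      logdProd Od _ _ (fun G _ => logd v (n G) m hv)
    have hrho : ∑ G ∈ Ev, rho v (n G) m = ∑ G ∈ Od, rho v (n G) m := by
      have hpt : ∀ (S : Finset (Finset (Fin r))), ∑ G ∈ S, rho v (n G) m
          = ∑ i ∈ range m, pim m (C ((-1:ℚ)^i / (v:ℚ)^(i+1)) * X^i)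
              * pim m (C (∑ G ∈ S, ∑ d ∈ range (n G), (d:ℚ)^(i+1))) := by
        intro S
        rw [Finset.sum_congr rfl (fun G _ => rho_expand v (n G) m), Finset.sum_comm]
        refine Finset.sum_congr rfl fun i _ => ?_
        rw [← Finset.mul_sum, ← map_sum, ← map_sum]
      rw [hpt Ev, hpt Od]
      refine Finset.sum_congr rfl fun i hi => ?_
      have hS : ∑ G ∈ Ev, ∑ d ∈ range (n G), (d:ℚ)^(i+1)
          = ∑ G ∈ Od, ∑ d ∈ range (n G), (d:ℚ)^(i+1) := by
        refine EvOd K _ (FD_S mw K (i+1) ?_)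
        have := Finset.mem_range.mp hi
        omega
      rw [hS]
    rw [map_sub, map_mul, map_mul, hlogN, hlogD, hrho]
    ring
  exact climb NN DD hDD0 (K.card - 1) h1 h2

lemma lowerset_mem_iff (S : Finset ℕ) (h : ∀ a b : ℕ, a ≤ b → b ∈ S → a ∈ S) (j : ℕ) :
    j ∈ S ↔ j < S.card := by
  constructor
  · intro hj
    have hsub : Finset.range (j+1) ⊆ S := fun i hi =>
      h i j (Nat.lt_succ_iff.mp (Finset.mem_range.mp hi)) hj
    have := Finset.card_le_card hsub
    simpa using this
  · intro hj
    by_contra hjS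
    have hsub : S ⊆ Finset.range j := by
      intro s hs
      rw [Finset.mem_range]
      by_contra hsj
      exact hjS (h j s (by omega) hs)
    have := Finset.card_le_card hsub
    simp at this
    omega

lemma conj_lt_iff (f : ℕ →₀ ℕ) (hf : Antitone f) (i j : ℕ) : j < conjPart f i ↔ i < f j := by
  rw [conjPart]
  rw [← lowerset_mem_iff _ ?lower j, Finset.mem_filter, Finsupp.mem_support_iff]
  · constructor
    · intro ⟨_, h2⟩; omega
    · intro h; exact ⟨by omega, by omega⟩
  case lower =>
    intro a b hab hb
    rw [Finset.mem_filter, Finsupp.mem_support_iff] at *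
    have := hf hab
    omega

-- concatenation of Ico blocks
lemma concatIco {M : Type*} [CommMonoid M] (G : ℕ → M) (a : ℕ → ℕ) (ha : Monotone a) :
    ∀ W, ∏ w ∈ range W, ∏ d ∈ Finset.Ico (a w) (a (w+1)), G d = ∏ d ∈ Finset.Ico (a 0) (a W), G d := by
  intro W
  induction W with
  | zero => simp
  | succ W ih =>
    rw [Finset.prod_range_succ, ih, Finset.prod_Ico_consecutive _ (ha (Nat.zero_le W)) (ha (Nat.le_succ W))]

noncomputable def hP (f : ℕ →₀ ℕ) : Polynomial ℚ :=
  ∏ b ∈ cells f, (X * C ((armL f b : ℚ)) + C ((legL f b : ℚ)) + 1)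

lemma hP_cells (f : ℕ →₀ ℕ) :
    hP f = ∏ j ∈ f.support, ∏ i ∈ range (f j),
      (X * C ((armL f (i, j) : ℚ)) + C ((legL f (i, j) : ℚ)) + 1) := by
  rw [hP, cells, Finset.prod_biUnion]
  · refine Finset.prod_congr rfl fun j _ => ?_
    rw [Finset.prod_image]
    intro i _ i' _ h
    exact (Prod.mk.injEq i j i' j).mp h |>.1
  · intro j hj j' hj' hne
    refine Finset.disjoint_left.mpr ?_
    rintro b hb hb'
    simp only [Finset.coe_image, Set.mem_image, Finset.mem_coe, Finset.mem_image] at hb hb'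
    obtain ⟨i, _, rfl⟩ := hb
    obtain ⟨i', _, h⟩ := hb'
    exact hne ((Prod.mk.injEq _ _ _ _).mp h).2.symm

lemma hP_eq (f : ℕ →₀ ℕ) (hf : Antitone f) (L : ℕ) (hL : ∀ j, L ≤ j → f j = 0) :
    hP f = ∏ j ∈ range L, ∏ w ∈ range L,
      ∏ d ∈ Finset.Ico (f j - f (j+w)) (f j - f (j+w+1)),
        (C (((w+1 : ℕ)):ℚ) + C ((d:ℕ):ℚ) * X) := by
  rw [hP_cells]
  rw [Finset.prod_subset
    (show f.support ⊆ range L from fun j hj => Finset.mem_range.mpr (by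
      by_contra h
      exact (Finsupp.mem_support_iff.mp hj) (hL j (by omega))))
    (fun j _ hj => by
      rw [Finsupp.notMem_support_iff.mp hj]
      simp)]
  refine Finset.prod_congr rfl fun j hj => ?_
  -- fix j; set a w := f j - f (j + w)
  have hmono : Monotone (fun w => f j - f (j + w)) := by
    intro w w' hww
    dsimp only
    have : f (j + w') ≤ f (j + w) := hf (by omega)
    omega
  -- RHS inner = product over d in range (f j) of the reflected factor
  have hcongr : ∀ w ∈ range L, ∏ d ∈ Finset.Ico (f j - f (j+w)) (f j - f (j+w+1)),
        (C (((w+1 : ℕ)):ℚ) + C ((d:ℕ):ℚ) * X)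
      = ∏ d ∈ Finset.Ico (f j - f (j+w)) (f j - f (j+w+1)),
        (X * C ((armL f (f j - 1 - d, j) : ℚ)) + C ((legL f (f j - 1 - d, j) : ℚ)) + 1) := by
    intro w _
    refine Finset.prod_congr rfl fun d hd => ?_
    obtain ⟨hd1, hd2⟩ := Finset.mem_Ico.mp hd
    have hw1 : f (j + w + 1) ≤ f (j + w) := hf (by omega)
    have hw2 : f (j + w) ≤ f j := hf (by omega)
    set i := f j - 1 - d with hi
    have hdfj : d < f j := by omega
    have harm : armL f (i, j) = d := by
      rw [armL]; simp only []; omega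
    have hconj : conjPart f i = j + w + 1 := by
      have hup : j + w < conjPart f i := (conj_lt_iff f hf i (j+w)).mpr (by omega)
      have hdown : ¬ (j + w + 1 < conjPart f i) := by
        rw [conj_lt_iff f hf i (j+w+1)]
        omega
      omega
    have hleg : legL f (i, j) = w := by
      rw [legL]; simp only []; rw [hconj]; omega
    rw [harm, hleg]
    push_cast
    rw [map_add, C_1]
    ring
  rw [Finset.prod_congr rfl hcongr]
  -- concatenate the Ico blocks
  simp only [Nat.add_assoc]
  rw [concatIco _ _ hmono L]
  have h0 : f j - f (j + 0) = 0 := by rw [Nat.add_zero]; omega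
  have hL' : f j - f (j + L) = f j := by rw [hL (j+L) (by omega)]; omega
  rw [h0, hL', ← Finset.range_eq_Ico]
  -- reflect
  exact (Finset.prod_range_reflect _ (f j)).symm

lemma hookA_eq (f : ℕ →₀ ℕ) : hookA f = algebraMap (Polynomial ℚ) (RatFunc ℚ) (hP f) := by
  rw [hookA, hP, map_prod]
  refine Finset.prod_congr rfl fun b _ => ?_
  rw [map_add, map_add, map_mul, map_one, RatFunc.algebraMap_X]
  norm_cast
  rw [Polynomial.C_eq_natCast, Polynomial.C_eq_natCast, map_natCast, map_natCast]

lemma hP_eval0_ne (f : ℕ →₀ ℕ) : (hP f).eval 0 ≠ 0 := by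
  rw [hP, Polynomial.eval_prod]
  refine Finset.prod_ne_zero_iff.mpr fun b _ => ?_
  simp only [Polynomial.eval_add, Polynomial.eval_mul, Polynomial.eval_X, Polynomial.eval_C,
    Polynomial.eval_one, zero_mul, zero_add]
  positivity


end Aux

open Polynomial Finset in
/-- Strong factorization of α-hook polynomials: for partitions `λ¹,…,λ^r`,
`u_I = hook_α(λ^I)` with `λ^I = ⊕_{i∈I} λ^i`, and any `H` with `|H| ≥ 2`,
`∏_{G⊆H} u_G^{(-1)^{|H|-|G|}} − 1 = O(α^{|H|-1})`. -/
theorem stmt_15 (r : ℕ) (lam : Fin r → (ℕ →₀ ℕ))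
    (hlam : ∀ i, Antitone ⇑(lam i))
    (H : Finset (Fin r)) (hH : 2 ≤ H.card) :
    IsBigO (H.card - 1)
      ((∏ G ∈ H.powerset,
          hookA (∑ i ∈ G, lam i) ^ ((-1 : ℤ) ^ (H.card - G.card))) - 1) := by
  set k := H.card - 1 with hk
  set L := (Finset.univ.sup fun i : Fin r => (lam i).support.sup id) + 1 with hLdef
  have hzero : ∀ i : Fin r, ∀ j, L ≤ j → lam i j = 0 := by
    intro i j hj
    by_contra h
    have hjs : j ∈ (lam i).support := Finsupp.mem_support_iff.mpr h
    have h1 : j ≤ (lam i).support.sup id := Finset.le_sup (f := id) hjs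
    have h2 : (lam i).support.sup id ≤ Finset.univ.sup fun i : Fin r => (lam i).support.sup id :=
      Finset.le_sup (f := fun i : Fin r => (lam i).support.sup id) (Finset.mem_univ i)
    omega
  have hfG : ∀ (G : Finset (Fin r)) (j : ℕ), (∑ i ∈ G, lam i) j = ∑ i ∈ G, lam i j := by
    intro G j
    rw [Finsupp.coe_finset_sum, Finset.sum_apply]
  have hant : ∀ G : Finset (Fin r), Antitone ⇑(∑ i ∈ G, lam i) := by
    intro G a b hab
    rw [hfG, hfG]
    exact Finset.sum_le_sum fun i _ => hlam i hab
  have hzG : ∀ (G : Finset (Fin r)) (j : ℕ), L ≤ j → (∑ i ∈ G, lam i) j = 0 := by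
    intro G j hj
    rw [hfG]
    exact Finset.sum_eq_zero fun i _ => hzero i j hj
  have hPG : ∀ G : Finset (Fin r), hP (∑ i ∈ G, lam i)
      = ∏ j ∈ range L, ∏ w ∈ range L,
          ∏ d ∈ Finset.Ico ((∑ i ∈ G, lam i) j - (∑ i ∈ G, lam i) (j+w))
            ((∑ i ∈ G, lam i) j - (∑ i ∈ G, lam i) (j+w+1)),
            (C (((w+1 : ℕ)):ℚ) + C ((d:ℕ):ℚ) * X) :=
    fun G => hP_eq _ (hant G) L (hzG G)
  set Ev := H.powerset.filter (fun G => Even (H.card - G.card)) with hEv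
  set Od := H.powerset.filter (fun G => ¬ Even (H.card - G.card)) with hOd
  set N := ∏ G ∈ Ev, hP (∑ i ∈ G, lam i) with hN
  set D := ∏ G ∈ Od, hP (∑ i ∈ G, lam i) with hD
  have hD0 : D.eval 0 ≠ 0 := by
    rw [hD, Polynomial.eval_prod]
    exact Finset.prod_ne_zero_iff.mpr fun G _ => hP_eval0_ne _
  have hN0 : N.eval 0 ≠ 0 := by
    rw [hN, Polynomial.eval_prod]
    exact Finset.prod_ne_zero_iff.mpr fun G _ => hP_eval0_ne _
  -- Step β : the alternating product is N/D
  have hsplit : (∏ G ∈ H.powerset, hookA (∑ i ∈ G, lam i) ^ ((-1 : ℤ) ^ (H.card - G.card)))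
      = algebraMap (Polynomial ℚ) (RatFunc ℚ) N / algebraMap (Polynomial ℚ) (RatFunc ℚ) D := by
    rw [← Finset.prod_filter_mul_prod_filter_not H.powerset (fun G => Even (H.card - G.card))]
    have e1 : ∏ G ∈ Ev, hookA (∑ i ∈ G, lam i) ^ ((-1 : ℤ) ^ (H.card - G.card))
        = algebraMap (Polynomial ℚ) (RatFunc ℚ) N := by
      rw [hN, map_prod]
      refine Finset.prod_congr rfl fun G hG => ?_
      rw [(Finset.mem_filter.mp hG).2.neg_one_pow, zpow_one, hookA_eq]
    have e2 : ∏ G ∈ Od, hookA (∑ i ∈ G, lam i) ^ ((-1 : ℤ) ^ (H.card - G.card))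
        = (algebraMap (Polynomial ℚ) (RatFunc ℚ) D)⁻¹ := by
      rw [hD, map_prod, ← Finset.prod_inv_distrib]
      refine Finset.prod_congr rfl fun G hG => ?_
      rw [(Nat.not_even_iff_odd.mp (Finset.mem_filter.mp hG).2).neg_one_pow, zpow_neg_one, hookA_eq]
    rw [e1, e2, div_eq_mul_inv]
  -- Step γ : X^k ∣ N - D
  have hdvd : (X : Polynomial ℚ)^k ∣ N - D := by
    rw [← pim_eq_iff]
    have swapN : ∀ (S : Finset (Finset (Fin r))), (hS : S ⊆ H.powerset) →
        ∏ G ∈ S, hP (∑ i ∈ G, lam i)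
        = ∏ j ∈ range L, ∏ w ∈ range L, ∏ G ∈ S,
            ∏ d ∈ Finset.Ico ((∑ i ∈ G, lam i) j - (∑ i ∈ G, lam i) (j+w))
              ((∑ i ∈ G, lam i) j - (∑ i ∈ G, lam i) (j+w+1)),
              (C (((w+1 : ℕ)):ℚ) + C ((d:ℕ):ℚ) * X) := by
      intro S _
      rw [Finset.prod_congr rfl fun G (_ : G ∈ S) => hPG G, Finset.prod_comm]
      exact Finset.prod_congr rfl fun j _ => Finset.prod_comm
    rw [hN, hD, swapN Ev (Finset.filter_subset _ _), swapN Od (Finset.filter_subset _ _),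
      map_prod, map_prod]
    refine Finset.prod_congr rfl fun j _ => ?_
    rw [map_prod, map_prod]
    refine Finset.prod_congr rfl fun w _ => ?_
    -- per piece
    have hvw : 1 ≤ w + 1 := by omega
    set mwA : Fin r → ℕ := fun t => lam t j - lam t (j+w) with hmwA
    set mwB : Fin r → ℕ := fun t => lam t j - lam t (j+w+1) with hmwB
    have hAeq : ∀ G ∈ H.powerset, (∑ i ∈ G, lam i) j - (∑ i ∈ G, lam i) (j+w)
        = ∑ t ∈ G, mwA t := by
      intro G _
      rw [hfG, hfG, hmwA]
      exact (Finset.sum_tsub_distrib G fun t _ => hlam t (by omega : j ≤ j + w)).symm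
    have hBeq : ∀ G ∈ H.powerset, (∑ i ∈ G, lam i) j - (∑ i ∈ G, lam i) (j+w+1)
        = ∑ t ∈ G, mwB t := by
      intro G _
      rw [hfG, hfG, hmwB]
      exact (Finset.sum_tsub_distrib G fun t _ => hlam t (by omega : j ≤ j + w + 1)).symm
    have hGamMul : ∀ G ∈ H.powerset,
        Gam (w+1) (∑ t ∈ G, mwA t) *
          (∏ d ∈ Finset.Ico ((∑ i ∈ G, lam i) j - (∑ i ∈ G, lam i) (j+w))
            ((∑ i ∈ G, lam i) j - (∑ i ∈ G, lam i) (j+w+1)),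
            (C (((w+1 : ℕ)):ℚ) + C ((d:ℕ):ℚ) * X))
        = Gam (w+1) (∑ t ∈ G, mwB t) := by
      intro G hG
      rw [hAeq G hG, hBeq G hG, Gam, Gam, Finset.range_eq_Ico, Finset.range_eq_Ico]
      refine Finset.prod_Ico_consecutive (M := Polynomial ℚ) _ (Nat.zero_le _) ?_
      refine Finset.sum_le_sum fun t _ => ?_
      have h1 := hlam t (by omega : j + w ≤ j + w + 1)
      have h2 := hlam t (by omega : j ≤ j + w)
      rw [hmwA, hmwB]
      dsimp only
      omega
    have hcoreA := core (w+1) hvw mwA H hH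
    have hcoreB := core (w+1) hvw mwB H hH
    rw [← pim_eq_iff (m := k)] at hcoreA hcoreB
    have hprodEv : pim k (∏ G ∈ Ev, Gam (w+1) (∑ t ∈ G, mwA t)) *
        pim k (∏ G ∈ Ev, ∏ d ∈ Finset.Ico ((∑ i ∈ G, lam i) j - (∑ i ∈ G, lam i) (j+w))
            ((∑ i ∈ G, lam i) j - (∑ i ∈ G, lam i) (j+w+1)),
            (C (((w+1 : ℕ)):ℚ) + C ((d:ℕ):ℚ) * X))
        = pim k (∏ G ∈ Ev, Gam (w+1) (∑ t ∈ G, mwB t)) := by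
      rw [← map_mul, ← Finset.prod_mul_distrib]
      exact congrArg _ (Finset.prod_congr rfl fun G hG => hGamMul G (Finset.filter_subset _ _ hG))
    have hprodOd : pim k (∏ G ∈ Od, Gam (w+1) (∑ t ∈ G, mwA t)) *
        pim k (∏ G ∈ Od, ∏ d ∈ Finset.Ico ((∑ i ∈ G, lam i) j - (∑ i ∈ G, lam i) (j+w))
            ((∑ i ∈ G, lam i) j - (∑ i ∈ G, lam i) (j+w+1)),
            (C (((w+1 : ℕ)):ℚ) + C ((d:ℕ):ℚ) * X))
        = pim k (∏ G ∈ Od, Gam (w+1) (∑ t ∈ G, mwB t)) := by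
      rw [← map_mul, ← Finset.prod_mul_distrib]
      exact congrArg _ (Finset.prod_congr rfl fun G hG => hGamMul G (Finset.filter_subset _ _ hG))
    have hunit : IsUnit (pim k (∏ G ∈ Ev, Gam (w+1) (∑ t ∈ G, mwA t))) := by
      refine isUnit_pim ?_
      rw [Polynomial.eval_prod]
      refine Finset.prod_ne_zero_iff.mpr fun G _ => ?_
      rw [Gam_eval0]
      exact pow_ne_zero _ (by positivity)
    refine hunit.mul_left_cancel ?_
    rw [hprodEv, hcoreB, ← hprodOd, hcoreA]
  -- Step δ : wrap up
  obtain ⟨wp, hwp⟩ := hdvd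
  have hDne : D ≠ 0 := fun h => hD0 (by rw [h]; simp)
  have hDalg : algebraMap (Polynomial ℚ) (RatFunc ℚ) D ≠ 0 := RatFunc.algebraMap_ne_zero hDne
  refine ⟨algebraMap (Polynomial ℚ) (RatFunc ℚ) wp / algebraMap (Polynomial ℚ) (RatFunc ℚ) D,
    ?_, ?_⟩
  · have hdd := RatFunc.denom_div_dvd wp D
    obtain ⟨c, hc⟩ := hdd
    intro h
    apply hD0
    rw [hc, Polynomial.eval_mul, h, zero_mul]
  · rw [hsplit]
    have hNeq : N = X^k * wp + D := by rw [← hwp]; ring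
    rw [hNeq, map_add, map_mul, map_pow, RatFunc.algebraMap_X]
    field_simp
    ring
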